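/- There exists a Δ⁰₂ function F : ℕ → ℕ that is not in any level Σ*ₙ or Π*ₙ of the oscillation hierarchy; that is, the oscillation hierarchy does not exhaust the limit computable functions. -/

import Mathlib

mutual
/-- Stage sequences admissible for level `Σ*ₙ` of the oscillation hierarchy:
at most `n` monotone phases, beginning by going up. -/
def SigmaSeq : ℕ → (ℕ → ℕ) → Prop
  | 0, _ => False
  | 1, g => Monotone g
  | n+2, g => ∃ s, (∀ i j, i ≤ j → j ≤ s → g i ≤ g j) ∧ PiSeq (n+1) fun t => g (s + t)
/-- Stage sequences admissible for level `Π*ₙ`: beginning by going down. -/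
def PiSeq : ℕ → (ℕ → ℕ) → Prop
  | 0, _ => False
  | 1, g => Antitone g
  | n+2, g => ∃ s, (∀ i j, i ≤ j → j ≤ s → g j ≤ g i) ∧ SigmaSeq (n+1) fun t => g (s + t)
end

/-- `F ∈ Σ*ₙ`. -/
def InSigma (n : ℕ) (F : ℕ → ℕ) : Prop :=
  ∃ f : ℕ → ℕ → ℕ, Computable₂ f ∧
    ∀ x, SigmaSeq n (f x) ∧ ∃ s, ∀ t, s ≤ t → f x t = F x

/-- `F ∈ Π*ₙ`. -/
def InPi (n : ℕ) (F : ℕ → ℕ) : Prop :=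
  ∃ f : ℕ → ℕ → ℕ, Computable₂ f ∧
    ∀ x, PiSeq n (f x) ∧ ∃ s, ∀ t, s ≤ t → f x t = F x

section OscAux

open Nat.Partrec Nat.Partrec.Code

/-! ### The run machinery -/

def OscStep (cap : ℕ) (p : ℕ × ℕ) (o : Option ℕ) : ℕ × ℕ :=
  if o = some p.1 ∧ p.2 < cap then (1 - p.1, p.2 + 1) else p

def OscRunUpTo (cap st : ℕ) (h : ℕ → Option ℕ) (k : ℕ) : ℕ × ℕ :=
  ((List.range k).map h).foldl (OscStep cap) (st, 0)

lemma OscRunUpTo_zero (cap st : ℕ) (h : ℕ → Option ℕ) :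
    OscRunUpTo cap st h 0 = (st, 0) := rfl

lemma OscRunUpTo_succ (cap st : ℕ) (h : ℕ → Option ℕ) (k : ℕ) :
    OscRunUpTo cap st h (k+1) = OscStep cap (OscRunUpTo cap st h k) (h k) := by
  simp [OscRunUpTo, List.range_succ]

lemma OscStep_cases (cap : ℕ) (p : ℕ × ℕ) (o : Option ℕ) :
    OscStep cap p o = p ∨
      (OscStep cap p o = (1 - p.1, p.2 + 1) ∧ o = some p.1 ∧ p.2 < cap) := by
  by_cases h : o = some p.1 ∧ p.2 < cap
  · exact Or.inr ⟨by simp [OscStep, h], h⟩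
  · exact Or.inl (by simp [OscStep, h])

lemma OscStep_count_le (cap : ℕ) (p : ℕ × ℕ) (o : Option ℕ) :
    p.2 ≤ (OscStep cap p o).2 ∧ (OscStep cap p o).2 ≤ p.2 + 1 := by
  rcases OscStep_cases cap p o with h | ⟨h, -⟩ <;> rw [h] <;> omega

lemma OscStep_eq_of_count_eq (cap : ℕ) (p : ℕ × ℕ) (o : Option ℕ)
    (h : (OscStep cap p o).2 = p.2) : OscStep cap p o = p := by
  rcases OscStep_cases cap p o with h' | ⟨h', -⟩
  · exact h'
  · rw [h'] at h; omega

lemma OscStep_hit (cap : ℕ) (p : ℕ × ℕ) (o : Option ℕ)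
    (h : (OscStep cap p o).2 ≠ p.2) : o = some p.1 ∧ p.2 < cap := by
  rcases OscStep_cases cap p o with h' | ⟨-, h'⟩
  · exact absurd (by rw [h']) h
  · exact h'

lemma OscRun_count_mono (cap st : ℕ) (h : ℕ → Option ℕ) :
    Monotone fun k => (OscRunUpTo cap st h k).2 := by
  apply monotone_nat_of_le_succ
  intro k
  rw [OscRunUpTo_succ]
  exact (OscStep_count_le cap _ _).1

lemma OscRun_count_le_cap (cap st : ℕ) (h : ℕ → Option ℕ) (k : ℕ) :
    (OscRunUpTo cap st h k).2 ≤ cap := by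
  induction k with
  | zero => simp [OscRunUpTo_zero]
  | succ k ih =>
    rw [OscRunUpTo_succ]
    rcases OscStep_cases cap (OscRunUpTo cap st h k) (h k) with h' | ⟨h', -, hlt⟩ <;>
      rw [h'] <;> omega

lemma OscRun_fst (cap st : ℕ) (hst : st ≤ 1) (h : ℕ → Option ℕ) (k : ℕ) :
    (OscRunUpTo cap st h k).1 = (st + (OscRunUpTo cap st h k).2) % 2 := by
  induction k with
  | zero => simp [OscRunUpTo_zero]; omega
  | succ k ih =>
    rw [OscRunUpTo_succ]
    rcases OscStep_cases cap (OscRunUpTo cap st h k) (h k) with h' | ⟨h', -, -⟩ <;> rw [h']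
    · exact ih
    · simp only []
      omega

/-- every monotone sequence of naturals bounded above stabilizes -/
lemma mono_bdd_stab (g : ℕ → ℕ) (mono : Monotone g) (B : ℕ) (hB : ∀ k, g k ≤ B) :
    ∃ K, ∀ k, K ≤ k → g k = g K := by
  have hne : (Set.range g).Nonempty := ⟨g 0, 0, rfl⟩
  have hbdd : BddAbove (Set.range g) := ⟨B, by rintro _ ⟨k, rfl⟩; exact hB k⟩
  obtain ⟨K, hK⟩ := Nat.sSup_mem hne hbdd
  refine ⟨K, fun k hk => le_antisymm ?_ (mono hk)⟩
  rw [hK]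
  exact le_csSup hbdd ⟨k, rfl⟩

lemma OscRun_stab (cap st : ℕ) (h : ℕ → Option ℕ) :
    ∃ K, ∀ k, K ≤ k → OscRunUpTo cap st h k = OscRunUpTo cap st h K := by
  obtain ⟨K, hK⟩ := mono_bdd_stab _ (OscRun_count_mono cap st h) cap
    (OscRun_count_le_cap cap st h)
  refine ⟨K, fun k hk => ?_⟩
  induction k with
  | zero => cases Nat.le_zero.1 hk; rfl
  | succ k ih =>
    rcases Nat.lt_or_ge K (k+1) with hlt | hge
    · have hk' : K ≤ k := Nat.lt_succ_iff.1 hlt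
      rw [OscRunUpTo_succ]
      have hc : (OscStep cap (OscRunUpTo cap st h k) (h k)).2 = (OscRunUpTo cap st h k).2 := by
        have h1 := hK (k+1) (by omega)
        have h2 := hK k hk'
        rw [OscRunUpTo_succ] at h1
        rw [h1, h2]
      rw [OscStep_eq_of_count_eq cap _ _ hc]
      exact ih hk'
    · have : K = k + 1 := le_antisymm hk hge
      rw [this]

/-! ### The diagonal approximation -/

def oscCap (x : ℕ) : ℕ := x.unpair.2.unpair.1 + 1
def oscStart (x : ℕ) : ℕ := if x.unpair.2.unpair.2 = 0 then 1 else 0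
def oscCode (x : ℕ) : Code := Denumerable.ofNat Code x.unpair.1

lemma oscStart_le_one (x : ℕ) : oscStart x ≤ 1 := by
  unfold oscStart; split <;> omega

def oscApprox (x s : ℕ) : ℕ :=
  (OscRunUpTo (oscCap x) (oscStart x) (fun t => evaln s (oscCode x) (Nat.pair x t)) s).1

noncomputable def oscLim (x t : ℕ) : Option ℕ :=
  @Part.toOption ℕ (eval (oscCode x) (Nat.pair x t)) (Classical.propDecidable _)

lemma oscLim_eq_some {x t y : ℕ} :
    oscLim x t = some y ↔ y ∈ eval (oscCode x) (Nat.pair x t) := by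
  unfold oscLim
  exact @Part.toOption_eq_some_iff ℕ _ (Classical.propDecidable _) _

lemma evaln_sub_oscLim {x t s y : ℕ} (h : evaln s (oscCode x) (Nat.pair x t) = some y) :
    oscLim x t = some y :=
  oscLim_eq_some.2 (evaln_sound h)

lemma oscLim_sub_evaln {x t y : ℕ} (h : oscLim x t = some y) :
    ∃ s, ∀ s', s ≤ s' → evaln s' (oscCode x) (Nat.pair x t) = some y := by
  obtain ⟨k, hk⟩ := evaln_complete.1 (oscLim_eq_some.1 h)
  exact ⟨k, fun s' hs' => evaln_mono hs' hk⟩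

noncomputable def oscT (x k : ℕ) : ℕ × ℕ :=
  OscRunUpTo (oscCap x) (oscStart x) (oscLim x) k

lemma oscT_succ (x k : ℕ) : oscT x (k+1) = OscStep (oscCap x) (oscT x k) (oscLim x k) :=
  OscRunUpTo_succ _ _ _ _

lemma oscT_stab (x : ℕ) : ∃ K, ∀ k, K ≤ k → oscT x k = oscT x K :=
  OscRun_stab _ _ _

noncomputable def oscK (x : ℕ) : ℕ := Classical.choose (oscT_stab x)

lemma oscK_spec (x : ℕ) : ∀ k, oscK x ≤ k → oscT x k = oscT x (oscK x) :=
  Classical.choose_spec (oscT_stab x)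

noncomputable def Flim (x : ℕ) : ℕ := (oscT x (oscK x)).1

/-- finite agreement of `evaln` with `oscLim` on an initial segment -/
lemma osc_agree (x K : ℕ) :
    ∃ S, ∀ s, S ≤ s → ∀ t, t < K → evaln s (oscCode x) (Nat.pair x t) = oscLim x t := by
  induction K with
  | zero => exact ⟨0, fun s _ t ht => absurd ht (Nat.not_lt_zero t)⟩
  | succ K ih =>
    obtain ⟨S, hS⟩ := ih
    rcases ho : oscLim x K with _ | y
    · refine ⟨S, fun s hs t ht => ?_⟩
      rcases Nat.lt_succ_iff_lt_or_eq.1 ht with ht' | rfl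
      · exact hS s hs t ht'
      · rcases he : evaln s (oscCode x) (Nat.pair x t) with _ | z
        · rw [ho]
        · rw [evaln_sub_oscLim he] at ho; exact absurd ho (by simp)
    · obtain ⟨S', hS'⟩ := oscLim_sub_evaln ho
      refine ⟨max S S', fun s hs t ht => ?_⟩
      rcases Nat.lt_succ_iff_lt_or_eq.1 ht with ht' | rfl
      · exact hS s (le_trans (le_max_left _ _) hs) t ht'
      · rw [hS' s (le_trans (le_max_right _ _) hs), ho]

/-- the approximation converges to `Flim` -/
lemma oscApprox_converges (x : ℕ) : ∃ S, ∀ s, S ≤ s → oscApprox x s = Flim x := by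
  set K := oscK x with hKdef
  obtain ⟨S, hS⟩ := osc_agree x K
  refine ⟨max S K, fun s hs => ?_⟩
  have hsS : S ≤ s := le_trans (le_max_left _ _) hs
  have hsK : K ≤ s := le_trans (le_max_right _ _) hs
  -- stage-s run equals the limit run
  have main : ∀ k, k ≤ s →
      OscRunUpTo (oscCap x) (oscStart x) (fun t => evaln s (oscCode x) (Nat.pair x t)) k
        = oscT x (min k K) := by
    intro k hk
    induction k with
    | zero => simp [OscRunUpTo_zero, oscT]
    | succ k ih =>
      have ihk := ih (by omega)
      rw [OscRunUpTo_succ]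
      rcases Nat.lt_or_ge k K with hlt | hge
      · have hmin : min k K = k := by omega
        have hmin' : min (k+1) K = k + 1 := by omega
        rw [hmin] at ihk
        rw [hmin', ihk, hS s hsS k hlt, oscT_succ]
      · have hmin : min k K = K := by omega
        have hmin' : min (k+1) K = K := by omega
        rw [hmin] at ihk
        rw [hmin', ihk]
        rcases OscStep_cases (oscCap x) (oscT x K) (evaln s (oscCode x) (Nat.pair x k))
          with h' | ⟨-, hsome, hlt⟩
        · exact h'
        · exfalso
          have hlim : oscLim x k = some ((oscT x K).1) := evaln_sub_oscLim hsome
          have h1 := oscT_succ x k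
          have h2 : oscT x k = oscT x K := oscK_spec x k hge
          have h3 : oscT x (k+1) = oscT x K := oscK_spec x (k+1) (by omega)
          rw [h2, hlim] at h1
          have : OscStep (oscCap x) (oscT x K) (some ((oscT x K).1))
              = (1 - (oscT x K).1, (oscT x K).2 + 1) := by
            simp [OscStep, hlt]
          rw [this, h3] at h1
          have := congrArg Prod.snd h1
          simp at this
  have := main s le_rfl
  rw [oscApprox, this, min_eq_right hsK]
  rfl

/-! ### Computability of the approximation -/

lemma oscApprox_primrec : Primrec₂ oscApprox := by
  have hcode : Primrec oscCode :=
    (Primrec.ofNat Code).comp (Primrec.fst.comp Primrec.unpair)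
  have hcap : Primrec oscCap :=
    Primrec.succ.comp (Primrec.fst.comp (Primrec.unpair.comp (Primrec.snd.comp Primrec.unpair)))
  have hstart : Primrec oscStart := by
    unfold oscStart
    exact Primrec.ite
      (Primrec.eq.comp (Primrec.snd.comp (Primrec.unpair.comp (Primrec.snd.comp Primrec.unpair)))
        (Primrec.const 0))
      (Primrec.const 1) (Primrec.const 0)
  -- the list of stage-s evaluations
  have hlist : Primrec fun a : ℕ × ℕ =>
      (List.range a.2).map fun t => evaln a.2 (oscCode a.1) (Nat.pair a.1 t) := by
    apply Primrec.list_map (Primrec.list_range.comp Primrec.snd)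
    have : Primrec fun p : (ℕ × ℕ) × ℕ => ((p.1.2, oscCode p.1.1), Nat.pair p.1.1 p.2) :=
      Primrec.pair (Primrec.pair (Primrec.snd.comp Primrec.fst)
        (hcode.comp (Primrec.fst.comp Primrec.fst)))
        (Primrec₂.natPair.comp (Primrec.fst.comp Primrec.fst) Primrec.snd)
    exact primrec_evaln.comp this
  -- the step function
  have hstep : Primrec₂ fun (a : ℕ × ℕ) (q : (ℕ × ℕ) × Option ℕ) =>
      OscStep (oscCap a.1) q.1 q.2 := by
    unfold OscStep
    have hc : PrimrecPred fun p : (ℕ × ℕ) × (ℕ × ℕ) × Option ℕ =>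
        p.2.2 = some p.2.1.1 ∧ p.2.1.2 < oscCap p.1.1 := by
      apply PrimrecPred.and
      · exact Primrec.eq.comp (Primrec.snd.comp Primrec.snd)
          (Primrec.option_some.comp (Primrec.fst.comp (Primrec.fst.comp Primrec.snd)))
      · exact Primrec.nat_lt.comp (Primrec.snd.comp (Primrec.fst.comp Primrec.snd))
          (hcap.comp (Primrec.fst.comp Primrec.fst))
    exact Primrec.ite hc
      (Primrec.pair
        (Primrec.nat_sub.comp (Primrec.const 1)
          (Primrec.fst.comp (Primrec.fst.comp Primrec.snd)))
        (Primrec.succ.comp (Primrec.snd.comp (Primrec.fst.comp Primrec.snd))))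
      (Primrec.fst.comp Primrec.snd)
  have hfold : Primrec fun a : ℕ × ℕ =>
      (((List.range a.2).map fun t => evaln a.2 (oscCode a.1) (Nat.pair a.1 t)).foldl
        (fun q b => OscStep (oscCap a.1) q b) ((oscStart a.1, 0) : ℕ × ℕ)) :=
    Primrec.list_foldl hlist (Primrec.pair (hstart.comp Primrec.fst) (Primrec.const 0)) hstep
  exact Primrec.fst.comp hfold

lemma oscApprox_computable : Computable₂ oscApprox := oscApprox_primrec.to_comp

/-! ### Alternation kills bounded-phase sequences -/

lemma alt_lemma : ∀ n : ℕ,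
    (∀ g : ℕ → ℕ, SigmaSeq n g → ∀ t : ℕ → ℕ,
      (∀ i j, i < j → j ≤ n → t i < t j) → (∀ i, i ≤ n → g (t i) = (1 + i) % 2) → False) ∧
    (∀ g : ℕ → ℕ, PiSeq n g → ∀ t : ℕ → ℕ,
      (∀ i j, i < j → j ≤ n → t i < t j) → (∀ i, i ≤ n → g (t i) = i % 2) → False) := by
  intro n
  induction n using Nat.strong_induction_on with
  | _ n IH =>
    match n with
    | 0 =>
      constructor <;> intro g hg <;> simp [SigmaSeq, PiSeq] at hg
    | 1 =>
      constructor <;> intro g hg t hmono hval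
      · simp only [SigmaSeq] at hg
        have h01 := hg (le_of_lt (hmono 0 1 one_pos le_rfl))
        have v0 := hval 0 (by omega)
        have v1 := hval 1 le_rfl
        omega
      · simp only [PiSeq] at hg
        have h01 := hg (le_of_lt (hmono 0 1 one_pos le_rfl))
        have v0 := hval 0 (by omega)
        have v1 := hval 1 le_rfl
        omega
    | (m+2) =>
      constructor <;> intro g hg t hmono hval
      · simp only [SigmaSeq] at hg
        obtain ⟨s, hup, hpi⟩ := hg
        have ht01 : t 0 < t 1 := hmono 0 1 one_pos (by omega)
        have v0 := hval 0 (by omega)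
        have v1 := hval 1 (by omega)
        have hs : s < t 1 := by
          by_contra hle
          have := hup (t 0) (t 1) (le_of_lt ht01) (by omega)
          omega
        have hst : ∀ i, i + 1 ≤ m + 2 → s < t (i+1) := by
          intro i hi
          rcases Nat.eq_zero_or_pos i with rfl | hpos
          · exact hs
          · exact lt_trans hs (hmono 1 (i+1) (by omega) hi)
        refine (IH (m+1) (by omega)).2 (fun u => g (s + u)) hpi (fun i => t (i+1) - s) ?_ ?_
        · intro i j hij hj
          have h1 := hst i (by omega)
          have h2 := hst j (by omega)
          have h3 := hmono (i+1) (j+1) (by omega) (by omega)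
          show t (i+1) - s < t (j+1) - s
          omega
        · intro i hi
          have h1 := hst i (by omega)
          have h2 := hval (i+1) (by omega)
          show g (s + (t (i+1) - s)) = i % 2
          have he : s + (t (i+1) - s) = t (i+1) := by omega
          rw [he, h2]
          omega
      · simp only [PiSeq] at hg
        obtain ⟨s, hdown, hsig⟩ := hg
        have ht01 : t 0 < t 1 := hmono 0 1 one_pos (by omega)
        have v0 := hval 0 (by omega)
        have v1 := hval 1 (by omega)
        have hs : s < t 1 := by
          by_contra hle
          have := hdown (t 0) (t 1) (le_of_lt ht01) (by omega)
          omega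
        have hst : ∀ i, i + 1 ≤ m + 2 → s < t (i+1) := by
          intro i hi
          rcases Nat.eq_zero_or_pos i with rfl | hpos
          · exact hs
          · exact lt_trans hs (hmono 1 (i+1) (by omega) hi)
        refine (IH (m+1) (by omega)).1 (fun u => g (s + u)) hsig (fun i => t (i+1) - s) ?_ ?_
        · intro i j hij hj
          have h1 := hst i (by omega)
          have h2 := hst j (by omega)
          have h3 := hmono (i+1) (j+1) (by omega) (by omega)
          show t (i+1) - s < t (j+1) - s
          omega
        · intro i hi
          have h1 := hst i (by omega)
          have h2 := hval (i+1) (by omega)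
          show g (s + (t (i+1) - s)) = (1 + i) % 2
          have he : s + (t (i+1) - s) = t (i+1) := by omega
          rw [he, h2]
          omega
lemma oscT_zero (x : ℕ) : oscT x 0 = (oscStart x, 0) := rfl

lemma oscT_fst (x k : ℕ) : (oscT x k).1 = (oscStart x + (oscT x k).2) % 2 :=
  OscRun_fst _ _ (oscStart_le_one x) _ k

lemma oscT_count_mono (x : ℕ) : Monotone fun k => (oscT x k).2 :=
  OscRun_count_mono _ _ _

/-! ### The diagonalization -/

lemma diag_main (f : ℕ → ℕ → ℕ) (c : Code)
    (hc : ∀ k : ℕ, eval c k = Part.some (f k.unpair.1 k.unpair.2)) (n b : ℕ)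
    (hconv : ∃ s, ∀ t, s ≤ t → f (Nat.pair (Encodable.encode c) (Nat.pair n b)) t
        = Flim (Nat.pair (Encodable.encode c) (Nat.pair n b))) :
    ∃ t : ℕ → ℕ,
      (∀ i j, i < j → j ≤ n → t i < t j) ∧
      (∀ i, i ≤ n → f (Nat.pair (Encodable.encode c) (Nat.pair n b)) (t i)
          = (oscStart (Nat.pair (Encodable.encode c) (Nat.pair n b)) + i) % 2) := by
  classical
  set x0 := Nat.pair (Encodable.encode c) (Nat.pair n b) with hx0
  have hcode : oscCode x0 = c := by
    rw [hx0]; unfold oscCode; rw [Nat.unpair_pair]; exact Denumerable.ofNat_encode c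
  have hcap : oscCap x0 = n + 1 := by
    rw [hx0]; unfold oscCap; rw [Nat.unpair_pair, Nat.unpair_pair]
  have hlim : ∀ t, oscLim x0 t = some (f x0 t) := by
    intro t
    apply oscLim_eq_some.2
    rw [hcode, hc]
    simp [Nat.unpair_pair]
  set K := oscK x0 with hK
  have hFv : Flim x0 = (oscT x0 K).1 := rfl
  -- the final count reaches the cap
  have hcfin : (oscT x0 K).2 = n + 1 := by
    have hle : (oscT x0 K).2 ≤ n + 1 := by
      rw [← hcap]; exact OscRun_count_le_cap _ _ _ K
    by_contra hne
    have hlt : (oscT x0 K).2 < oscCap x0 := by rw [hcap]; omega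
    obtain ⟨s0, hs0⟩ := hconv
    set u := max K s0 with hu
    have h1 : oscT x0 u = oscT x0 K := oscK_spec x0 u (le_max_left _ _)
    have h2 : oscT x0 (u+1) = oscT x0 K := oscK_spec x0 (u+1) (by omega)
    have hfu : f x0 u = (oscT x0 K).1 := by rw [← hFv]; exact hs0 u (le_max_right _ _)
    have h3 := oscT_succ x0 u
    rw [h2, h1, hlim, hfu] at h3
    have h4 : OscStep (oscCap x0) (oscT x0 K) (some ((oscT x0 K).1))
        = (1 - (oscT x0 K).1, (oscT x0 K).2 + 1) := by
      simp [OscStep, hlt]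
    rw [h4] at h3
    have := congrArg Prod.snd h3
    simp at this
  -- hit times
  have hex : ∀ i, i ≤ n → ∃ t, i + 1 ≤ (oscT x0 (t+1)).2 := by
    intro i hi
    refine ⟨K, ?_⟩
    rw [oscK_spec x0 (K+1) (by omega), hcfin]; omega
  set t : ℕ → ℕ := fun i => if h : i ≤ n then Nat.find (hex i h) else 0 with ht
  have hcount : ∀ i, i ≤ n → (oscT x0 (t i)).2 = i ∧ (oscT x0 (t i + 1)).2 = i + 1 := by
    intro i hi
    have htdef : t i = Nat.find (hex i hi) := by rw [ht]; simp [hi]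
    have hspec : i + 1 ≤ (oscT x0 (t i + 1)).2 := by
      rw [htdef]; exact Nat.find_spec (hex i hi)
    have hmin : (oscT x0 (t i)).2 ≤ i := by
      rcases Nat.eq_zero_or_pos (t i) with h0 | hpos
      · rw [h0, oscT_zero]; exact Nat.zero_le i
      · obtain ⟨u, hu⟩ := Nat.exists_eq_succ_of_ne_zero (by omega : t i ≠ 0)
        have hlt : u < Nat.find (hex i hi) := by rw [← htdef]; omega
        have := Nat.find_min (hex i hi) hlt
        have hu' : t i = u + 1 := hu
        rw [hu']
        omega
    have hstep : (oscT x0 (t i + 1)).2 ≤ (oscT x0 (t i)).2 + 1 := by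
      rw [oscT_succ]; exact (OscStep_count_le _ _ _).2
    omega
  have hhit : ∀ i, i ≤ n → f x0 (t i) = (oscStart x0 + i) % 2 := by
    intro i hi
    obtain ⟨h1, h2⟩ := hcount i hi
    have hne : (OscStep (oscCap x0) (oscT x0 (t i)) (oscLim x0 (t i))).2
        ≠ (oscT x0 (t i)).2 := by
      rw [← oscT_succ]; omega
    have hhit' := (OscStep_hit _ _ _ hne).1
    rw [hlim] at hhit'
    have : f x0 (t i) = (oscT x0 (t i)).1 := Option.some_injective _ hhit'
    rw [this, oscT_fst, h1]
  refine ⟨t, ?_, hhit⟩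
  intro i j hij hj
  obtain ⟨hi1, hi2⟩ := hcount i (by omega)
  obtain ⟨hj1, hj2⟩ := hcount j hj
  by_contra hle
  push_neg at hle
  have := oscT_count_mono x0 hle
  simp only [] at this
  omega

end OscAux

/-- The oscillation hierarchy does not exhaust the limit computable functions:
there is a `Δ⁰₂` function not in any `Σ*ₙ` or `Π*ₙ`. -/
theorem oscillation_hierarchy_not_exhaustive :
    ∃ F : ℕ → ℕ,
      (∃ f : ℕ → ℕ → ℕ, Computable₂ f ∧ ∀ x, ∃ s, ∀ t, s ≤ t → f x t = F x) ∧
      ∀ n : ℕ, ¬ InSigma n F ∧ ¬ InPi n F := by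
  open Nat.Partrec Nat.Partrec.Code in
  refine ⟨Flim, ⟨oscApprox, oscApprox_computable, fun x => oscApprox_converges x⟩, ?_⟩
  intro n
  constructor
  · rintro ⟨f, hcomp, hf⟩
    have hu : Computable fun k : ℕ => f k.unpair.1 k.unpair.2 :=
      hcomp.comp (Computable.fst.comp Primrec.unpair.to_comp)
        (Computable.snd.comp Primrec.unpair.to_comp)
    have hp : Nat.Partrec fun k : ℕ => (Part.some (f k.unpair.1 k.unpair.2) : Part ℕ) :=
      Partrec.nat_iff.1 hu.partrec
    obtain ⟨c, hc⟩ := exists_code.1 hp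
    have hc' : ∀ k : ℕ, eval c k = Part.some (f k.unpair.1 k.unpair.2) :=
      fun k => congrFun hc k
    set x0 := Nat.pair (Encodable.encode c) (Nat.pair n 0) with hx0
    obtain ⟨hseq, hcv⟩ := hf x0
    obtain ⟨t, hord, hval⟩ := diag_main f c hc' n 0 hcv
    have hstart : oscStart x0 = 1 := by
      rw [hx0]; unfold oscStart; rw [Nat.unpair_pair, Nat.unpair_pair]; simp
    exact (alt_lemma n).1 (f x0) hseq t hord fun i hi => by rw [hval i hi, hstart]
  · rintro ⟨f, hcomp, hf⟩
    have hu : Computable fun k : ℕ => f k.unpair.1 k.unpair.2 :=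
      hcomp.comp (Computable.fst.comp Primrec.unpair.to_comp)
        (Computable.snd.comp Primrec.unpair.to_comp)
    have hp : Nat.Partrec fun k : ℕ => (Part.some (f k.unpair.1 k.unpair.2) : Part ℕ) :=
      Partrec.nat_iff.1 hu.partrec
    obtain ⟨c, hc⟩ := exists_code.1 hp
    have hc' : ∀ k : ℕ, eval c k = Part.some (f k.unpair.1 k.unpair.2) :=
      fun k => congrFun hc k
    set x0 := Nat.pair (Encodable.encode c) (Nat.pair n 1) with hx0
    obtain ⟨hseq, hcv⟩ := hf x0
    obtain ⟨t, hord, hval⟩ := diag_main f c hc' n 1 hcv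
    have hstart : oscStart x0 = 0 := by
      rw [hx0]; unfold oscStart; rw [Nat.unpair_pair, Nat.unpair_pair]; simp
    refine (alt_lemma n).2 (f x0) hseq t hord fun i hi => ?_
    rw [hval i hi, hstart]
    omega
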